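/- For every natural number n ≥ 39, every admissible multiplicity function m, and every minimal sum labeling ℓ of G(n,m): ℓ(v₁) = ℓ(v₂) for all vertices v₁, v₂ ∈ ψ(3). -/

import Mathlib

/-- `Sn n = {2,3,…,n} ∪ {n+2}`. -/
def Sn (n : ℕ) : Set ℕ := {k | (2 ≤ k ∧ k ≤ n) ∨ k = n + 2}

/-- `m` is an admissible multiplicity function for `Sn n`. -/
def Admissible (n : ℕ) (m : ℕ → ℕ) : Prop :=
  (∀ i ∈ Sn n, 2 * i ∈ Sn n → 2 ≤ m i) ∧
  (∀ i ∈ Sn n, 2 * i ∉ Sn n → m i = 1) ∧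
  (∀ i, i ∉ Sn n → m i = 0)

/-- The vertex set of `G(n,m)`: pairs `(i,j)` with `i ∈ Sn n` and `j < m i`. -/
def Vnm (n : ℕ) (m : ℕ → ℕ) : Set (ℕ × ℕ) := {p | p.1 ∈ Sn n ∧ p.2 < m p.1}

/-- Distinct vertices `u`, `v` of `G(n,m)` are adjacent iff `u.1 + v.1 ∈ Sn n`. -/
def AdjG (n : ℕ) (u v : ℕ × ℕ) : Prop := u ≠ v ∧ u.1 + v.1 ∈ Sn n

/-- `psi m i` is the set of vertices induced by the integer `i`. -/
def psi (m : ℕ → ℕ) (i : ℕ) : Set (ℕ × ℕ) := {p | p.1 = i ∧ p.2 < m i}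

/-- The set of proper terminals of a vertex `v` of `G(n,m)`. -/
def tau (n : ℕ) (m : ℕ → ℕ) (v : ℕ × ℕ) : Set (ℕ × ℕ) :=
  {w ∈ Vnm n m | w ≠ v ∧ v.1 + w.1 ∉ Sn n}

/-- A (possibly non-injective) sum labeling of the graph `G(n,m)`. -/
def IsSumLabelingG (n : ℕ) (m : ℕ → ℕ) (ℓ : ℕ × ℕ → ℕ) : Prop :=
  (∀ v ∈ Vnm n m, 1 ≤ ℓ v) ∧
  ∀ u ∈ Vnm n m, ∀ v ∈ Vnm n m, u ≠ v →
    (AdjG n u v ↔ ∃ w ∈ Vnm n m, ℓ u + ℓ v = ℓ w)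

namespace PsiAux

/-- The set of labels realized on vertices. -/
def Lab (n : ℕ) (m : ℕ → ℕ) (ℓ : ℕ × ℕ → ℕ) (t : ℕ) : Prop :=
  ∃ w ∈ Vnm n m, t = ℓ w

/-- All hypotheses of the main theorem, bundled. -/
structure Ctx (n : ℕ) (m : ℕ → ℕ) (ℓ : ℕ × ℕ → ℕ) : Prop where
  hn : 39 ≤ n
  hm : Admissible n m
  hl : IsSumLabelingG n m ℓ
  hmin : ∃ u ∈ Vnm n m, ℓ u = 1

variable {n : ℕ} {m : ℕ → ℕ} {ℓ : ℕ × ℕ → ℕ}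

lemma Sn_iff {k : ℕ} : k ∈ Sn n ↔ (2 ≤ k ∧ k ≤ n) ∨ k = n + 2 := Iff.rfl

lemma Vnm_iff {p : ℕ × ℕ} : p ∈ Vnm n m ↔ p.1 ∈ Sn n ∧ p.2 < m p.1 := Iff.rfl

lemma Ctx.pos (C : Ctx n m ℓ) {v : ℕ × ℕ} (hv : v ∈ Vnm n m) : 1 ≤ ℓ v := C.hl.1 v hv

lemma Ctx.m_pos (C : Ctx n m ℓ) {i : ℕ} (hi : i ∈ Sn n) : 1 ≤ m i := by
  by_cases h : 2 * i ∈ Sn n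
  · have := C.hm.1 i hi h; omega
  · have := C.hm.2.1 i hi h; omega

lemma Ctx.v0 (C : Ctx n m ℓ) {i : ℕ} (hi : i ∈ Sn n) : ((i, 0) : ℕ × ℕ) ∈ Vnm n m :=
  ⟨hi, C.m_pos hi⟩

lemma Ctx.m2 (C : Ctx n m ℓ) : 2 ≤ m 2 := by
  have hn := C.hn
  exact C.hm.1 2 (Or.inl (by omega)) (Or.inl (by omega))

lemma Ctx.m3 (C : Ctx n m ℓ) : 2 ≤ m 3 := by
  have hn := C.hn
  exact C.hm.1 3 (Or.inl (by omega)) (Or.inl (by omega))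

lemma Ctx.m4 (C : Ctx n m ℓ) : 2 ≤ m 4 := by
  have hn := C.hn
  exact C.hm.1 4 (Or.inl (by omega)) (Or.inl (by omega))

/-- Vertices whose doubled coordinate is not in `Sn` have second coordinate 0. -/
lemma Ctx.sec_zero (C : Ctx n m ℓ) {w : ℕ × ℕ} (hw : w ∈ Vnm n m)
    (h : 2 * w.1 ∉ Sn n) : w.2 = 0 := by
  have h1 := C.hm.2.1 w.1 hw.1 h
  have := hw.2
  omega

lemma sum_in (C : Ctx n m ℓ) {u v : ℕ × ℕ} (hu : u ∈ Vnm n m) (hv : v ∈ Vnm n m)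
    (hne : u ≠ v) (hs : u.1 + v.1 ∈ Sn n) : Lab n m ℓ (ℓ u + ℓ v) :=
  (C.hl.2 u hu v hv hne).1 ⟨hne, hs⟩

lemma sum_out (C : Ctx n m ℓ) {u v : ℕ × ℕ} (hu : u ∈ Vnm n m) (hv : v ∈ Vnm n m)
    (hne : u ≠ v) (hs : u.1 + v.1 ∉ Sn n) : ¬ Lab n m ℓ (ℓ u + ℓ v) := fun hL =>
  hs ((C.hl.2 u hu v hv hne).2 hL).2

lemma V_finite : (Vnm n m).Finite := by
  have hsub : Vnm n m ⊆ (Set.Iic (n+2)) ×ˢ (Set.Iio ((Finset.range (n+3)).sup m)) := by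
    rintro ⟨i, j⟩ ⟨hi, hj⟩
    have hi' : 2 ≤ i ∧ i ≤ n ∨ i = n + 2 := hi
    constructor
    · simp only [Set.mem_Iic]; omega
    · simp only [Set.mem_Iio]
      exact lt_of_lt_of_le hj (Finset.le_sup (by simp only [Finset.mem_range]; omega))
  exact Set.Finite.subset ((Set.finite_Iic _).prod (Set.finite_Iio _)) hsub

lemma exists_max (C : Ctx n m ℓ) {S : Set (ℕ × ℕ)} (hS : S ⊆ Vnm n m)
    (hne : S.Nonempty) : ∃ w ∈ S, ∀ u ∈ S, ℓ u ≤ ℓ w :=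
  Set.exists_max_image S ℓ (V_finite.subset hS) hne

lemma exists_min (C : Ctx n m ℓ) {S : Set (ℕ × ℕ)} (hS : S ⊆ Vnm n m)
    (hne : S.Nonempty) : ∃ w ∈ S, ∀ u ∈ S, ℓ w ≤ ℓ u :=
  Set.exists_min_image S ℓ (V_finite.subset hS) hne

/-- Every non-isolated-coordinate vertex has a neighbor. -/
lemma Ctx.v1 (C : Ctx n m ℓ) {i : ℕ} (hi : i ∈ Sn n) (h2 : 2 * i ∈ Sn n) :
    ((i, 1) : ℕ × ℕ) ∈ Vnm n m :=
  ⟨hi, by have := C.hm.1 i hi h2; show 1 < m i; omega⟩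

lemma Ctx.partner (C : Ctx n m ℓ) {w : ℕ × ℕ} (hw : w ∈ Vnm n m) (hni : w.1 ≠ n + 2) :
    ∃ p ∈ Vnm n m, p ≠ w ∧ w.1 + p.1 ∈ Sn n := by
  have hn := C.hn
  have hw1 : 2 ≤ w.1 ∧ w.1 ≤ n ∨ w.1 = n + 2 := hw.1
  by_cases hle : w.1 ≤ n - 2
  · by_cases h20 : w = (2, 0)
    · refine ⟨(2, 1), C.v1 (Or.inl (by omega)) (Or.inl (by omega)), ?_, Or.inl (by omega)⟩
      rw [h20]; simp
    · exact ⟨(2, 0), C.v0 (Or.inl (by omega)), fun h => h20 h.symm, Or.inl (by omega)⟩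
  · by_cases hn1 : w.1 = n - 1
    · refine ⟨(3, 0), C.v0 (Or.inl (by omega)), ?_, Or.inr (by omega)⟩
      intro h; have h1 := congrArg Prod.fst h; simp at h1; omega
    · have hwn : w.1 = n := by omega
      refine ⟨(2, 0), C.v0 (Or.inl (by omega)), ?_, Or.inr (by omega)⟩
      intro h; have h1 := congrArg Prod.fst h; simp at h1; omega

/-- The isolated vertex. -/
lemma Ctx.z_mem (C : Ctx n m ℓ) : ((n+2, 0) : ℕ × ℕ) ∈ Vnm n m := C.v0 (Or.inr rfl)

lemma Ctx.z_unique (C : Ctx n m ℓ) {w : ℕ × ℕ} (hw : w ∈ Vnm n m) (h : w.1 = n + 2) :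
    w = (n+2, 0) := by
  have hn := C.hn
  have h2 : w.2 = 0 := C.sec_zero hw (by intro hc; rcases hc with ⟨h1,h2⟩|h1 <;> omega)
  exact Prod.ext h h2

/-- The maximum label is attained exactly at `z = (n+2,0)`. -/
lemma Ctx.z_max (C : Ctx n m ℓ) : ∀ u ∈ Vnm n m, u ≠ (n+2, 0) → ℓ u < ℓ (n+2, 0) := by
  obtain ⟨w, hwV, hwmax⟩ := exists_max C (le_refl (Vnm n m)) ⟨_, C.z_mem⟩
  have hcoord : ∀ v ∈ Vnm n m, (∀ u ∈ Vnm n m, ℓ u ≤ ℓ v) → v = (n+2, 0) := by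
    intro v hv hvmax
    by_contra hne
    have hv1 : v.1 ≠ n + 2 := fun h => hne (C.z_unique hv h)
    obtain ⟨p, hpV, hpne, hps⟩ := C.partner hv hv1
    obtain ⟨w', hw'V, hw'⟩ := sum_in C hv hpV (Ne.symm hpne) hps
    have := hvmax w' hw'V
    have := C.pos hpV
    omega
  have hwz : w = (n+2, 0) := hcoord w hwV hwmax
  subst hwz
  intro u huV hune
  rcases lt_or_eq_of_le (hwmax u huV) with h | h
  · exact h
  · exfalso
    exact hune (hcoord u huV (fun u' hu' => h ▸ hwmax u' hu'))

/-- If `v` is a maximal-label non-isolated vertex, each of its neighbors `u`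
satisfies `ℓ v + ℓ u = ℓ (n+2,0)`. -/
lemma Ctx.nbr_label (C : Ctx n m ℓ) {v : ℕ × ℕ} (hv : v ∈ Vnm n m)
    (hmax : ∀ u ∈ Vnm n m, u.1 ≠ n + 2 → ℓ u ≤ ℓ v)
    {u : ℕ × ℕ} (hu : u ∈ Vnm n m) (hne : u ≠ v) (hadj : v.1 + u.1 ∈ Sn n) :
    ℓ v + ℓ u = ℓ (n+2, 0) := by
  obtain ⟨w, hwV, hw⟩ := sum_in C hv hu (Ne.symm hne) hadj
  have hpos := C.pos hu
  by_cases hw1 : w.1 = n + 2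
  · rw [C.z_unique hwV hw1] at hw; exact hw
  · have := hmax w hwV hw1
    omega

/-- A vertex of `psi i` distinct from any given vertex `v`, provided `m i ≥ 2`. -/
lemma Ctx.psi_mem_ne (C : Ctx n m ℓ) {i : ℕ} (hi : i ∈ Sn n) (h2 : 2 * i ∈ Sn n)
    (v : ℕ × ℕ) : ∃ p ∈ Vnm n m, p.1 = i ∧ p ≠ v := by
  by_cases h : v = (i, 0)
  · exact ⟨(i, 1), C.v1 hi h2, rfl, by rw [h]; simp⟩
  · exact ⟨(i, 0), C.v0 hi, rfl, fun hc => h hc.symm⟩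

/-- Kill: a maximal non-isolated vertex cannot have coordinate `≤ n-3`. -/
lemma Ctx.kill_low (C : Ctx n m ℓ) {v : ℕ × ℕ} (hv : v ∈ Vnm n m)
    (hmax : ∀ u ∈ Vnm n m, u.1 ≠ n + 2 → ℓ u ≤ ℓ v) (hb : v.1 + 3 ≤ n) : False := by
  have hn := C.hn
  have hv1 : 2 ≤ v.1 ∧ v.1 ≤ n ∨ v.1 = n + 2 := hv.1
  obtain ⟨p2, hp2V, hp21, hp2ne⟩ := C.psi_mem_ne (Or.inl (by omega)) (Or.inl (by omega)) v
    (i := 2)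
  obtain ⟨p3, hp3V, hp31, hp3ne⟩ := C.psi_mem_ne (Or.inl (by omega)) (Or.inl (by omega)) v
    (i := 3)
  have e2 : ℓ v + ℓ p2 = ℓ (n+2, 0) :=
    C.nbr_label hv hmax hp2V hp2ne (Or.inl (by omega))
  have e3 : ℓ v + ℓ p3 = ℓ (n+2, 0) :=
    C.nbr_label hv hmax hp3V hp3ne (Or.inl (by omega))
  have heq : ℓ p2 = ℓ p3 := by omega
  have hyV : ((n-1, 0) : ℕ × ℕ) ∈ Vnm n m := C.v0 (Or.inl (by omega))
  have hin : Lab n m ℓ (ℓ (n-1, 0) + ℓ p3) := by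
    refine sum_in C hyV hp3V ?_ (Or.inr (by omega))
    intro h; have := congrArg Prod.fst h; simp [hp31] at this; omega
  have hout : ¬ Lab n m ℓ (ℓ (n-1, 0) + ℓ p2) := by
    refine sum_out C hyV hp2V ?_ ?_
    · intro h; have := congrArg Prod.fst h; simp [hp21] at this; omega
    · intro hc; rcases hc with ⟨h1, h2⟩ | h1 <;> simp [hp21] at * <;> omega
  rw [heq] at hout
  exact hout hin

/-- Kill: a maximal non-isolated vertex cannot have coordinate `n-2`. -/
lemma Ctx.kill_n2 (C : Ctx n m ℓ) {v : ℕ × ℕ} (hv : v ∈ Vnm n m)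
    (hmax : ∀ u ∈ Vnm n m, u.1 ≠ n + 2 → ℓ u ≤ ℓ v) (hb : v.1 = n - 2) : False := by
  have hn := C.hn
  have hp2V : ((2,0) : ℕ × ℕ) ∈ Vnm n m := C.v0 (Or.inl (by omega))
  have hp4V : ((4,0) : ℕ × ℕ) ∈ Vnm n m := C.v0 (Or.inl (by omega))
  have hne2 : ((2,0) : ℕ × ℕ) ≠ v := by
    intro h; have := congrArg Prod.fst h; simp at this; omega
  have hne4 : ((4,0) : ℕ × ℕ) ≠ v := by
    intro h; have := congrArg Prod.fst h; simp at this; omega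
  have e2 : ℓ v + ℓ (2,0) = ℓ (n+2, 0) := C.nbr_label hv hmax hp2V hne2 (by
    show 2 ≤ v.1 + 2 ∧ v.1 + 2 ≤ n ∨ v.1 + 2 = n + 2; omega)
  have e4 : ℓ v + ℓ (4,0) = ℓ (n+2, 0) := C.nbr_label hv hmax hp4V hne4 (by
    show 2 ≤ v.1 + 4 ∧ v.1 + 4 ≤ n ∨ v.1 + 4 = n + 2; omega)
  have heq : ℓ (2,0) = ℓ ((4:ℕ),(0:ℕ)) := by omega
  have hqV : ((n-3, 0) : ℕ × ℕ) ∈ Vnm n m := C.v0 (Or.inl (by omega))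
  have hin : Lab n m ℓ (ℓ (n-3, 0) + ℓ (2,0)) := by
    refine sum_in C hqV hp2V ?_ (Or.inl (by show 2 ≤ n-3+2 ∧ n-3+2 ≤ n; omega))
    intro h; have := congrArg Prod.fst h; simp at this; omega
  have hout : ¬ Lab n m ℓ (ℓ (n-3, 0) + ℓ (4,0)) := by
    refine sum_out C hqV hp4V ?_ ?_
    · intro h; have := congrArg Prod.fst h; simp at this; omega
    · intro hc; rcases hc with ⟨h1, h2⟩ | h1 <;> simp at * <;> omega
  rw [heq] at hin
  exact hout hin

/-- Goal case: a maximal non-isolated vertex of coordinate `n-1` forces all of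
`psi 3` to carry the same label. -/
lemma Ctx.goal_n1 (C : Ctx n m ℓ) {v : ℕ × ℕ} (hv : v ∈ Vnm n m)
    (hmax : ∀ u ∈ Vnm n m, u.1 ≠ n + 2 → ℓ u ≤ ℓ v) (hb : v.1 = n - 1)
    {u : ℕ × ℕ} (hu : u ∈ Vnm n m) (hu3 : u.1 = 3) :
    ℓ v + ℓ u = ℓ (n+2, 0) := by
  have hn := C.hn
  refine C.nbr_label hv hmax hu ?_ (Or.inr (by omega))
  intro h; have := congrArg Prod.fst h; rw [hu3, hb] at this; omega

/-- Membership of `psi 3` vertices in `Vnm`. -/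
lemma Ctx.psi3_mem (C : Ctx n m ℓ) {v : ℕ × ℕ} (hv : v ∈ psi m 3) : v ∈ Vnm n m := by
  have hn := C.hn
  exact ⟨by rw [hv.1]; exact Or.inl (by omega), by rw [hv.1]; exact hv.2⟩

/-- The hard case: the unique maximal non-isolated vertex is `(n,0)`. -/
structure HCtx (n : ℕ) (m : ℕ → ℕ) (ℓ : ℕ × ℕ → ℕ) extends Ctx n m ℓ : Prop where
  hmax : ∀ u ∈ Vnm n m, u.1 ≠ n + 2 → ℓ u ≤ ℓ (n, 0)
  hstrict : ∀ u ∈ Vnm n m, u.1 ≠ n + 2 → u ≠ (n, 0) → ℓ u < ℓ (n, 0)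


/-- The label gap `c = M - M₂`. -/
def cc (n : ℕ) (ℓ : ℕ × ℕ → ℕ) : ℕ := ℓ (n+2, 0) - ℓ (n, 0)

lemma HCtx.xV (H : HCtx n m ℓ) : ((n, 0) : ℕ × ℕ) ∈ Vnm n m := by
  have hn := H.hn; exact H.v0 (Or.inl (by omega))

lemma HCtx.yV (H : HCtx n m ℓ) : ((n-1, 0) : ℕ × ℕ) ∈ Vnm n m := by
  have hn := H.hn; exact H.v0 (Or.inl (by omega))

lemma HCtx.y'V (H : HCtx n m ℓ) : ((n-2, 0) : ℕ × ℕ) ∈ Vnm n m := by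
  have hn := H.hn; exact H.v0 (Or.inl (by omega))

lemma HCtx.M2_lt_M (H : HCtx n m ℓ) : ℓ (n, 0) < ℓ (n+2, 0) := by
  have hn := H.hn
  refine H.toCtx.z_max (n, 0) H.xV ?_
  intro h; have := congrArg Prod.fst h; simp at this

lemma HCtx.cc_pos (H : HCtx n m ℓ) : 1 ≤ cc n ℓ := by
  have := H.M2_lt_M; unfold cc; omega

lemma HCtx.cc_spec (H : HCtx n m ℓ) : ℓ (n+2, 0) = ℓ (n, 0) + cc n ℓ := by
  have := H.M2_lt_M; unfold cc; omega

lemma HCtx.lab_le (H : HCtx n m ℓ) {t : ℕ} (hL : Lab n m ℓ t) : t ≤ ℓ (n+2, 0) := by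
  obtain ⟨w, hwV, hw⟩ := hL
  by_cases h : w = (n+2, 0)
  · rw [hw, h]
  · have := H.toCtx.z_max w hwV h; omega

lemma HCtx.lab_M (H : HCtx n m ℓ) : Lab n m ℓ (ℓ (n+2, 0)) := ⟨_, H.z_mem, rfl⟩

lemma HCtx.lab_pos (H : HCtx n m ℓ) {t : ℕ} (hL : Lab n m ℓ t) : 1 ≤ t := by
  obtain ⟨w, hwV, hw⟩ := hL; have := H.pos hwV; omega

/-- L1: every `psi 2` vertex is labeled `c`. -/
lemma HCtx.psi2_label (H : HCtx n m ℓ) {u : ℕ × ℕ} (hu : u ∈ Vnm n m) (h2 : u.1 = 2) :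
    ℓ u = cc n ℓ := by
  have hn := H.hn
  have hne : u ≠ (n, 0) := by
    intro h; have := congrArg Prod.fst h; rw [h2] at this; omega
  have := H.toCtx.nbr_label H.xV H.hmax hu hne (Or.inr (by simp [h2]))
  have := H.cc_spec
  omega

lemma HCtx.lab_cc (H : HCtx n m ℓ) : Lab n m ℓ (cc n ℓ) := by
  have hn := H.hn
  exact ⟨(2, 0), H.v0 (Or.inl (by omega)), (H.psi2_label (H.v0 (Or.inl (by omega))) rfl).symm⟩

/-- L2: carriers of the label `c` lie in `psi 2 ∪ {x}`. -/
lemma HCtx.cc_carrier (H : HCtx n m ℓ) {w : ℕ × ℕ} (hw : w ∈ Vnm n m)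
    (hl : ℓ w = cc n ℓ) : w.1 = 2 ∨ w = (n, 0) := by
  have hn := H.hn
  have hM2 := H.M2_lt_M
  have hspec := H.cc_spec
  by_contra hcon
  push_neg at hcon
  obtain ⟨h2, hx⟩ := hcon
  by_cases hz : w.1 = n + 2
  · have := H.z_unique hw hz
    rw [this] at hl
    have h1 := H.pos H.xV
    omega
  · have hout : ¬ Lab n m ℓ (ℓ (n, 0) + ℓ w) := by
      refine sum_out H.toCtx H.xV hw ?_ ?_
      · intro h; exact hx h.symm
      · intro hc
        have hw1 : 2 ≤ w.1 ∧ w.1 ≤ n ∨ w.1 = n + 2 := hw.1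
        rcases hc with ⟨h1, h2'⟩ | h1 <;> simp at * <;> omega
    rw [hl] at hout
    rw [← hspec] at hout
    exact hout H.lab_M

/-- L3: adding `c` to the label of any vertex with coordinate `∉ {n-1, n+2}` stays in `L`. -/
lemma HCtx.plus_cc (H : HCtx n m ℓ) {w : ℕ × ℕ} (hw : w ∈ Vnm n m)
    (h1 : w.1 ≠ n - 1) (h2 : w.1 ≠ n + 2) : Lab n m ℓ (ℓ w + cc n ℓ) := by
  have hn := H.hn
  obtain ⟨p, hpV, hp1, hpne⟩ := H.toCtx.psi_mem_ne (Or.inl (by omega)) (Or.inl (by omega)) w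
    (i := 2)
  have hpl : ℓ p = cc n ℓ := H.psi2_label hpV hp1
  have hw1 : 2 ≤ w.1 ∧ w.1 ≤ n ∨ w.1 = n + 2 := hw.1
  have hadj : w.1 + p.1 ∈ Sn n := by
    rw [hp1]; by_cases h : w.1 = n
    · exact Or.inr (by omega)
    · exact Or.inl (by omega)
  have := sum_in H.toCtx hw hpV (Ne.symm hpne) hadj
  rwa [hpl] at this

/-- L4 (chain structure): every label climbs by steps of `c` to `f` or `M`,
and all same-class values in between are labels. -/
lemma HCtx.chain (H : HCtx n m ℓ) {t : ℕ} (hL : Lab n m ℓ t) :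
    (t ≤ ℓ (n-1, 0) ∧ t ≡ ℓ (n-1, 0) [MOD cc n ℓ] ∧
      ∀ v, t ≤ v → v ≤ ℓ (n-1, 0) → v ≡ ℓ (n-1, 0) [MOD cc n ℓ] → Lab n m ℓ v) ∨
    (t ≤ ℓ (n+2, 0) ∧ t ≡ ℓ (n+2, 0) [MOD cc n ℓ] ∧
      ∀ v, t ≤ v → v ≤ ℓ (n+2, 0) → v ≡ ℓ (n+2, 0) [MOD cc n ℓ] → Lab n m ℓ v) := by
  have hn := H.hn
  have hcc := H.cc_pos
  suffices key : ∀ d t, ℓ (n+2, 0) ≤ t + d → Lab n m ℓ t →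
    (t ≤ ℓ (n-1, 0) ∧ t ≡ ℓ (n-1, 0) [MOD cc n ℓ] ∧
      ∀ v, t ≤ v → v ≤ ℓ (n-1, 0) → v ≡ ℓ (n-1, 0) [MOD cc n ℓ] → Lab n m ℓ v) ∨
    (t ≤ ℓ (n+2, 0) ∧ t ≡ ℓ (n+2, 0) [MOD cc n ℓ] ∧
      ∀ v, t ≤ v → v ≤ ℓ (n+2, 0) → v ≡ ℓ (n+2, 0) [MOD cc n ℓ] → Lab n m ℓ v) by
    exact key (ℓ (n+2,0)) t (by omega) hL
  intro d
  induction d with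
  | zero =>
    intro t hd hL
    have hle := H.lab_le hL
    have ht : t = ℓ (n+2, 0) := by omega
    right
    refine ⟨by omega, by rw [ht], ?_⟩
    intro v h1 h2 _
    have : v = ℓ (n+2,0) := by omega
    rw [this]; exact H.lab_M
  | succ d ih =>
    intro t hd hL
    by_cases hex : ∃ w ∈ Vnm n m, ℓ w = t ∧ w.1 ≠ n - 1 ∧ w.1 ≠ n + 2
    · obtain ⟨w, hwV, hwl, hw1, hw2⟩ := hex
      have hstep : Lab n m ℓ (t + cc n ℓ) := by
        have := H.plus_cc hwV hw1 hw2; rwa [hwl] at this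
      have hle : t + cc n ℓ ≤ ℓ (n+2, 0) := H.lab_le hstep
      have := ih (t + cc n ℓ) (by omega) hstep
      have hmodstep : t ≡ t + cc n ℓ [MOD cc n ℓ] := by
        have h0 : (0 : ℕ) ≡ cc n ℓ [MOD cc n ℓ] :=
          ((Nat.modEq_zero_iff_dvd).mpr dvd_rfl).symm
        simpa using Nat.ModEq.add_left t h0
      have vt_eq : ∀ v, t ≤ v → v < t + cc n ℓ → v ≡ t [MOD cc n ℓ] → v = t := by
        intro v h1 h2 h3
        by_contra hne
        have hdvd : cc n ℓ ∣ v - t := (Nat.modEq_iff_dvd' h1).mp h3.symm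
        have := Nat.le_of_dvd (by omega) hdvd
        omega
      rcases this with ⟨hA, hB, hC⟩ | ⟨hA, hB, hC⟩
      · left
        refine ⟨by omega, hmodstep.trans hB, ?_⟩
        intro v h1 h2 h3
        by_cases hv : t + cc n ℓ ≤ v
        · exact hC v hv h2 h3
        · have : v = t := vt_eq v h1 (by omega) (h3.trans (hmodstep.trans hB).symm)
          rw [this]; exact hL
      · right
        refine ⟨by omega, hmodstep.trans hB, ?_⟩
        intro v h1 h2 h3
        by_cases hv : t + cc n ℓ ≤ v
        · exact hC v hv h2 h3
        · have : v = t := vt_eq v h1 (by omega) (h3.trans (hmodstep.trans hB).symm)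
          rw [this]; exact hL
    · push_neg at hex
      obtain ⟨w, hwV, hwl⟩ := hL
      rcases (by tauto : w.1 = n - 1 ∨ w.1 = n + 2) with h | h
      · have hw0 : w = (n-1, 0) := by
          refine Prod.ext h (H.sec_zero hwV ?_)
          rw [h]; intro hc; rcases hc with ⟨h1, h2⟩ | h1 <;> omega
        left
        rw [hw0] at hwl
        refine ⟨by omega, by rw [hwl], ?_⟩
        intro v h1 h2 _
        have : v = ℓ (n-1, 0) := by omega
        rw [this]; exact ⟨_, H.yV, rfl⟩
      · have hw0 : w = (n+2, 0) := H.z_unique hwV h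
        right
        rw [hw0] at hwl
        refine ⟨by omega, by rw [hwl], ?_⟩
        intro v h1 h2 _
        have : v = ℓ (n+2, 0) := by omega
        rw [this]; exact H.lab_M

/-- L5: `f + c` is not a label. -/
lemma HCtx.f_plus_cc_out (H : HCtx n m ℓ) : ¬ Lab n m ℓ (ℓ (n-1, 0) + cc n ℓ) := by
  have hn := H.hn
  have hp2V : ((2,0) : ℕ × ℕ) ∈ Vnm n m := H.v0 (Or.inl (by omega))
  have h := sum_out H.toCtx H.yV hp2V (by
      intro h; have := congrArg Prod.fst h; simp at this; omega)
    (by intro hc; rcases hc with ⟨h1, h2⟩ | h1 <;> simp at * <;> omega)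
  rwa [H.psi2_label hp2V rfl] at h

/-- L6: the only carrier of the label `f` is `y = (n-1,0)`. -/
lemma HCtx.f_carrier (H : HCtx n m ℓ) {w : ℕ × ℕ} (hw : w ∈ Vnm n m)
    (hl : ℓ w = ℓ (n-1, 0)) : w = (n-1, 0) := by
  have hn := H.hn
  by_cases h1 : w.1 = n - 1
  · exact Prod.ext h1 (H.sec_zero hw (by rw [h1]; intro hc; rcases hc with ⟨a,b⟩|a <;> omega))
  · by_cases h2 : w.1 = n + 2
    · exfalso
      have hz := H.z_unique hw h2
      rw [hz] at hl
      have : ℓ (n-1, 0) < ℓ (n+2, 0) := by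
        refine H.toCtx.z_max _ H.yV ?_
        intro h; have := congrArg Prod.fst h; simp at this; omega
      omega
    · exfalso
      have := H.plus_cc hw h1 h2
      rw [hl] at this
      exact H.f_plus_cc_out this

/-- `f < M₂`. -/
lemma HCtx.f_lt_M2 (H : HCtx n m ℓ) : ℓ (n-1, 0) < ℓ (n, 0) := by
  have hn := H.hn
  refine H.hstrict _ H.yV (by simp; omega) ?_
  intro h; have := congrArg Prod.fst h; simp at this; omega

lemma HCtx.cc_ne_f (H : HCtx n m ℓ) : cc n ℓ ≠ ℓ (n-1, 0) := by
  have hn := H.hn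
  intro h
  have hp2V : ((2,0) : ℕ × ℕ) ∈ Vnm n m := H.v0 (Or.inl (by omega))
  have := H.f_carrier hp2V (by rw [H.psi2_label hp2V rfl, h])
  have := congrArg Prod.fst this; simp at this; omega

/-- psi3 facts: `f + ℓ u ∈ L` for `u ∈ psi 3`. -/
lemma HCtx.psi3_f_in (H : HCtx n m ℓ) {u : ℕ × ℕ} (hu : u ∈ Vnm n m) (h3 : u.1 = 3) :
    Lab n m ℓ (ℓ (n-1, 0) + ℓ u) := by
  have hn := H.hn
  refine sum_in H.toCtx H.yV hu ?_ (Or.inr (by simp [h3]; omega))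
  intro h; have := congrArg Prod.fst h; rw [h3] at this; simp at this; omega

/-- Carriers of a psi3 label lie in `psi 3 ∪ {y}`. -/
lemma HCtx.psi3_carrier (H : HCtx n m ℓ) {u : ℕ × ℕ} (hu : u ∈ Vnm n m) (h3 : u.1 = 3)
    {w : ℕ × ℕ} (hw : w ∈ Vnm n m) (hl : ℓ w = ℓ u) : w.1 = 3 ∨ w = (n-1, 0) := by
  have hn := H.hn
  by_contra hcon
  push_neg at hcon
  obtain ⟨hw3, hwy⟩ := hcon
  have hout := sum_out H.toCtx H.yV hw (fun h => hwy h.symm) (by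
    intro hc
    have hw1 : 2 ≤ w.1 ∧ w.1 ≤ n ∨ w.1 = n + 2 := hw.1
    rcases hc with ⟨a, b⟩ | a <;> simp at * <;> omega)
  rw [hl] at hout
  exact hout (H.psi3_f_in hu h3)

lemma HCtx.psi3_ne_f (H : HCtx n m ℓ) {u : ℕ × ℕ} (hu : u ∈ Vnm n m) (h3 : u.1 = 3) :
    ℓ u ≠ ℓ (n-1, 0) := by
  have hn := H.hn
  intro h
  have := H.f_carrier hu h
  have := congrArg Prod.fst this; rw [h3] at this; omega

/-- psi3 top: `f + ℓ u ≤ M` and `f + ℓ u ≡ M mod c`. -/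
lemma HCtx.psi3_top (H : HCtx n m ℓ) {u : ℕ × ℕ} (hu : u ∈ Vnm n m) (h3 : u.1 = 3) :
    ℓ (n-1, 0) + ℓ u ≤ ℓ (n+2, 0) ∧
      ℓ (n-1, 0) + ℓ u ≡ ℓ (n+2, 0) [MOD cc n ℓ] := by
  have hpos := H.pos hu
  rcases H.chain (H.psi3_f_in hu h3) with ⟨hA, _, _⟩ | ⟨hA, hB, _⟩
  · omega
  · exact ⟨hA, hB⟩

lemma HCtx.lab_one (H : HCtx n m ℓ) : Lab n m ℓ 1 := by
  obtain ⟨u, hu, h⟩ := H.hmin; exact ⟨u, hu, h.symm⟩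

/-- residues: every label is congruent to `f` or `M` mod `c`. -/
lemma HCtx.res (H : HCtx n m ℓ) {t : ℕ} (hL : Lab n m ℓ t) :
    ((cc n ℓ : ℤ) ∣ (ℓ (n-1, 0) : ℤ) - t) ∨ ((cc n ℓ : ℤ) ∣ (ℓ (n+2, 0) : ℤ) - t) := by
  rcases H.chain hL with ⟨_, h, _⟩ | ⟨_, h, _⟩
  · left; exact h.dvd
  · right; exact h.dvd

/-- Pure integer divisibility kill for `c ≥ 3`. -/
lemma int_kill {c F M a b : ℤ} (hc : 3 ≤ c)
    (b1 : c ∣ M - F - a) (b2 : c ∣ M - F - b)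
    (a1 : c ∣ F - 1 ∨ c ∣ M - 1) (a2 : c ∣ F ∨ c ∣ M)
    (a4 : c ∣ F - a ∨ c ∣ M - a) (a3 : c ∣ F - (a + b) ∨ c ∣ M - (a + b)) : False := by
  have hcle : ∀ k : ℤ, 0 < k → k < 3 → ¬ (c ∣ k) := fun k hk1 hk2 hdvd => by
    have := Int.le_of_dvd hk1 hdvd; omega
  rcases a2 with hF | hM
  · rcases a1 with h1' | h1'
    · exact hcle 1 one_pos (by norm_num)
        (by have : c ∣ _ := dvd_sub hF h1'; convert this using 1; ring)
    · have ht1 : c ∣ 1 - a := by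
        have h' : c ∣ M - a := by
          have : c ∣ _ := dvd_add b1 hF; convert this using 1; ring
        have : c ∣ _ := dvd_sub h' h1'; convert this using 1; ring
      have ht2 : c ∣ 1 - b := by
        have h' : c ∣ M - b := by
          have : c ∣ _ := dvd_add b2 hF; convert this using 1; ring
        have : c ∣ _ := dvd_sub h' h1'; convert this using 1; ring
      rcases a3 with h | h
      · refine hcle 2 (by norm_num) (by norm_num) ?_
        have h'' : c ∣ a + b := by
          have : c ∣ _ := dvd_sub hF h; convert this using 1; ring
        have : c ∣ _ := dvd_add (dvd_add h'' ht1) ht2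
        convert this using 1; ring
      · refine hcle 1 one_pos (by norm_num) ?_
        have h'' : c ∣ 1 - a - b := by
          have : c ∣ _ := dvd_sub h h1'; convert this using 1; ring
        have h4 : c ∣ -b := by
          have : c ∣ _ := dvd_sub h'' ht1; convert this using 1; ring
        have : c ∣ _ := dvd_sub ht2 h4
        convert this using 1; ring
  · rcases a1 with h1' | h1'
    · have hta : c ∣ a + 1 := by
        have h' : c ∣ F + a := by
          have : c ∣ _ := dvd_sub hM b1; convert this using 1; ring
        have : c ∣ _ := dvd_sub h' h1'; convert this using 1; ring
      rcases a4 with h | h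
      · refine hcle 2 (by norm_num) (by norm_num) ?_
        have h'' : c ∣ a - 1 := by
          have : c ∣ _ := dvd_sub h1' h; convert this using 1; ring
        have : c ∣ _ := dvd_sub hta h''
        convert this using 1; ring
      · refine hcle 1 one_pos (by norm_num) ?_
        have h'' : c ∣ a := by
          have : c ∣ _ := dvd_sub hM h; convert this using 1; ring
        have : c ∣ _ := dvd_sub hta h''
        convert this using 1; ring
    · exact hcle 1 one_pos (by norm_num)
        (by have : c ∣ _ := dvd_sub hM h1'; convert this using 1; ring)

/-- The kill of `c ≥ 3`. -/
lemma HCtx.kill_c3 (H : HCtx n m ℓ) (hc : 3 ≤ cc n ℓ) {t1 t2 : ℕ}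
    (h1 : Lab n m ℓ t1) (h12 : Lab n m ℓ (t1 + t2))
    (hm1 : ℓ (n-1, 0) + t1 ≡ ℓ (n+2, 0) [MOD cc n ℓ])
    (hm2 : ℓ (n-1, 0) + t2 ≡ ℓ (n+2, 0) [MOD cc n ℓ]) : False := by
  have hc3 : (3 : ℤ) ≤ (cc n ℓ : ℤ) := by exact_mod_cast hc
  refine int_kill (c := (cc n ℓ : ℤ)) (F := (ℓ (n-1,0) : ℤ)) (M := (ℓ (n+2,0) : ℤ))
    (a := (t1 : ℤ)) (b := (t2 : ℤ)) hc3 ?_ ?_ ?_ ?_ ?_ ?_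
  · have := hm1.dvd; push_cast at this; convert this using 1; ring
  · have := hm2.dvd; push_cast at this; convert this using 1; ring
  · rcases H.res H.lab_one with h | h
    · left; exact_mod_cast h
    · right; exact_mod_cast h
  · rcases H.res H.lab_cc with h | h
    · left
      have h2 : ((cc n ℓ : ℤ)) ∣ ((ℓ (n-1,0) : ℤ) - (cc n ℓ : ℤ)) + (cc n ℓ : ℤ) :=
        dvd_add h dvd_rfl
      convert h2 using 1; ring
    · right
      have h2 : ((cc n ℓ : ℤ)) ∣ ((ℓ (n+2,0) : ℤ) - (cc n ℓ : ℤ)) + (cc n ℓ : ℤ) :=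
        dvd_add h dvd_rfl
      convert h2 using 1; ring
  · exact H.res h1
  · rcases H.res h12 with h | h
    · left; have h' := h; push_cast at h'; convert h' using 1
    · right; have h' := h; push_cast at h'; convert h' using 1

/-- `y' = (n-2,0)` is not adjacent to `psi 3`. -/
lemma HCtx.y'_out3 (H : HCtx n m ℓ) {u : ℕ × ℕ} (hu : u ∈ Vnm n m) (h3 : u.1 = 3) :
    ¬ Lab n m ℓ (ℓ (n-2, 0) + ℓ u) := by
  have hn := H.hn
  refine sum_out H.toCtx H.y'V hu ?_ ?_
  · intro h; have := congrArg Prod.fst h; rw [h3] at this; simp at this; omega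
  · intro hc; rcases hc with ⟨a, b⟩ | a <;> rw [h3] at * <;> simp at * <;> omega

lemma HCtx.e_lt_M2 (H : HCtx n m ℓ) : ℓ (n-2, 0) < ℓ (n, 0) := by
  have hn := H.hn
  refine H.hstrict _ H.y'V (by simp; omega) ?_
  intro h; have := congrArg Prod.fst h; simp at this; omega

lemma HCtx.e_ne_f (H : HCtx n m ℓ) : ℓ (n-2, 0) ≠ ℓ (n-1, 0) := by
  have hn := H.hn
  intro h
  have := H.f_carrier H.y'V h
  have := congrArg Prod.fst this; simp at this; omega

/-- `y` is not adjacent to anything outside `psi 3`. -/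
lemma HCtx.y_out (H : HCtx n m ℓ) {w : ℕ × ℕ} (hw : w ∈ Vnm n m) (h3 : w.1 ≠ 3)
    (hy : w.1 ≠ n - 1) : ¬ Lab n m ℓ (ℓ (n-1, 0) + ℓ w) := by
  have hn := H.hn
  refine sum_out H.toCtx H.yV hw ?_ ?_
  · intro h; have := congrArg Prod.fst h; simp at this; omega
  · intro hc
    have hw1 : 2 ≤ w.1 ∧ w.1 ≤ n ∨ w.1 = n + 2 := hw.1
    rcases hc with ⟨a, b⟩ | a <;> simp at * <;> omega

/-- Low-coordinate vertices are adjacent to `psi 3`. -/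
lemma HCtx.smalls_in3 (H : HCtx n m ℓ) {w : ℕ × ℕ} (hw : w ∈ Vnm n m)
    (h4 : 4 ≤ w.1) (hn3 : w.1 ≤ n - 3) {u : ℕ × ℕ} (hu : u ∈ Vnm n m) (h3 : u.1 = 3) :
    Lab n m ℓ (ℓ w + ℓ u) := by
  have hn := H.hn
  refine sum_in H.toCtx hw hu ?_ (Or.inl (by rw [h3]; omega))
  intro h; have := congrArg Prod.fst h; rw [h3] at this; omega

/-- Distinct psi3 vertices are adjacent. -/
lemma HCtx.twins3 (H : HCtx n m ℓ) {u1 u2 : ℕ × ℕ} (hu1 : u1 ∈ Vnm n m) (h13 : u1.1 = 3)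
    (hu2 : u2 ∈ Vnm n m) (h23 : u2.1 = 3) (hne : u1 ≠ u2) :
    Lab n m ℓ (ℓ u1 + ℓ u2) := by
  have hn := H.hn
  exact sum_in H.toCtx hu1 hu2 hne (Or.inl (by rw [h13, h23]; omega))

/-- Coordinate case analysis for vertices. -/
lemma HCtx.coord_cases (H : HCtx n m ℓ) {w : ℕ × ℕ} (hw : w ∈ Vnm n m) :
    w.1 = 2 ∨ w.1 = 3 ∨ (4 ≤ w.1 ∧ w.1 ≤ n - 3) ∨ w.1 = n - 2 ∨ w.1 = n - 1 ∨
      w.1 = n ∨ w.1 = n + 2 := by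
  have hn := H.hn
  have hw1 : 2 ≤ w.1 ∧ w.1 ≤ n ∨ w.1 = n + 2 := hw.1
  omega

lemma HCtx.y'_unique (H : HCtx n m ℓ) {w : ℕ × ℕ} (hw : w ∈ Vnm n m) (h : w.1 = n - 2) :
    w = (n-2, 0) := by
  have hn := H.hn
  exact Prod.ext h (H.sec_zero hw (by rw [h]; intro hc; rcases hc with ⟨a,b⟩|a <;> omega))

lemma HCtx.y_unique (H : HCtx n m ℓ) {w : ℕ × ℕ} (hw : w ∈ Vnm n m) (h : w.1 = n - 1) :
    w = (n-1, 0) := by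
  have hn := H.hn
  exact Prod.ext h (H.sec_zero hw (by rw [h]; intro hc; rcases hc with ⟨a,b⟩|a <;> omega))

lemma HCtx.x_unique (H : HCtx n m ℓ) {w : ℕ × ℕ} (hw : w ∈ Vnm n m) (h : w.1 = n) :
    w = (n, 0) := by
  have hn := H.hn
  exact Prod.ext h (H.sec_zero hw (by rw [h]; intro hc; rcases hc with ⟨a,b⟩|a <;> omega))

lemma HCtx.psi2_eq (H : HCtx n m ℓ) {w : ℕ × ℕ} (hw : w ∈ Vnm n m) (h : w.1 = 2) :
    ℓ w = cc n ℓ := H.psi2_label hw h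

lemma HCtx.lab_M1 (H : HCtx n m ℓ) : Lab n m ℓ (ℓ (n, 0)) := ⟨_, H.xV, rfl⟩

lemma HCtx.lab_f (H : HCtx n m ℓ) : Lab n m ℓ (ℓ (n-1, 0)) := ⟨_, H.yV, rfl⟩

lemma HCtx.lab_e (H : HCtx n m ℓ) : Lab n m ℓ (ℓ (n-2, 0)) := ⟨_, H.y'V, rfl⟩

lemma HCtx.kill_c1 (H : HCtx n m ℓ) (hc : cc n ℓ = 1) {u1 u2 : ℕ × ℕ}
    (hu1 : u1 ∈ Vnm n m) (h13 : u1.1 = 3) (hu2 : u2 ∈ Vnm n m) (h23 : u2.1 = 3)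
    (hlt : ℓ u1 < ℓ u2) : False := by
  have hn := H.hn
  have hspec := H.cc_spec
  rw [hc] at hspec
  have hfM2 := H.f_lt_M2
  have heM2 := H.e_lt_M2
  have hef := H.e_ne_f
  have hf2 : 2 ≤ ℓ (n-1, 0) := by
    have h1 := H.cc_ne_f; rw [hc] at h1
    have hfp := H.pos H.yV
    omega
  have hlow : ∀ v, 1 ≤ v → v ≤ ℓ (n-1, 0) → Lab n m ℓ v := by
    rcases H.chain H.lab_one with ⟨h1, _, hmid⟩ | ⟨h1, _, hmid⟩
    · intro v hv1 hv2
      exact hmid v hv1 hv2 (by rw [hc]; exact Nat.modEq_one)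
    · exfalso
      have hbad := hmid (ℓ (n-1,0) + 1) (by omega) (by omega)
        (by rw [hc]; exact Nat.modEq_one)
      have hout := H.f_plus_cc_out; rw [hc] at hout
      exact hout hbad
  have hupp : ∀ v, Lab n m ℓ v → ℓ (n-1, 0) < v →
      ∀ w, v ≤ w → w ≤ ℓ (n+2, 0) → Lab n m ℓ w := by
    intro v hv hfv w h1 h2
    rcases H.chain hv with ⟨h1', _, _⟩ | ⟨_, _, hmid⟩
    · omega
    · exact hmid w h1 h2 (by rw [hc]; exact Nat.modEq_one)
  have hp1 : ¬ Lab n m ℓ (ℓ (n-2,0) + ℓ u1) := H.y'_out3 hu1 h13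
  have hp2 : ¬ Lab n m ℓ (ℓ (n-2,0) + ℓ u2) := H.y'_out3 hu2 h23
  have hy1 : Lab n m ℓ (ℓ (n-1,0) + ℓ u1) := H.psi3_f_in hu1 h13
  have hy2 : Lab n m ℓ (ℓ (n-1,0) + ℓ u2) := H.psi3_f_in hu2 h23
  have htop1 : ℓ (n-1,0) + ℓ u1 ≤ ℓ (n+2,0) := (H.psi3_top hu1 h13).1
  have htop2 : ℓ (n-1,0) + ℓ u2 ≤ ℓ (n+2,0) := (H.psi3_top hu2 h23).1
  have hvne : u1 ≠ u2 := fun h => by rw [h] at hlt; omega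
  have htw : Lab n m ℓ (ℓ u1 + ℓ u2) := H.twins3 hu1 h13 hu2 h23 hvne
  have hpos1 := H.pos hu1
  have hfout := H.f_plus_cc_out; rw [hc] at hfout
  have ht2 : 2 ≤ ℓ u1 := by
    by_contra h
    have h1 : ℓ u1 = 1 := by omega
    rw [h1] at hy1; exact hfout hy1
  have htf1 : ℓ u1 ≠ ℓ (n-1,0) := H.psi3_ne_f hu1 h13
  have htf2 : ℓ u2 ≠ ℓ (n-1,0) := H.psi3_ne_f hu2 h23
  -- t' ≥ 4
  have ht4 : 4 ≤ ℓ u2 := by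
    by_contra h
    have h3' : ℓ u2 = 3 := by omega
    have h2' : ℓ u1 = 2 := by omega
    by_cases hE : ℓ (n-2,0) ≤ ℓ (n-1,0)
    · have he1 : ℓ (n-2,0) + 1 ≤ ℓ (n-1,0) := by
        rcases lt_or_eq_of_le hE with h' | h'
        · omega
        · exact absurd h' hef
      have hgt : ℓ (n-1,0) < ℓ (n-2,0) + ℓ u1 := by
        by_contra h'
        exact hp1 (hlow _ (by have := H.pos H.y'V; omega) (by omega))
      have heq : ℓ (n-2,0) + ℓ u2 = ℓ (n-1,0) + ℓ u1 := by omega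
      rw [heq] at hp2; exact hp2 hy1
    · push_neg at hE
      have hbad := hupp _ H.lab_e hE (ℓ (n-2,0) + ℓ u1) (by omega) (by omega)
      exact hp1 hbad
  -- f ≥ 4
  have hf4 : 4 ≤ ℓ (n-1,0) := by
    by_contra hficase
    have hsm : ∀ w : ℕ × ℕ, w ∈ Vnm n m → (w.1 = 5 ∨ w.1 = 7 ∨ w.1 = 9) →
        ℓ w ≤ ℓ (n-1, 0) ∨ ℓ w + 1 = ℓ (n, 0) := by
      intro w hw hco
      have hpw := H.pos hw
      have hyw : ¬ Lab n m ℓ (ℓ (n-1,0) + ℓ w) := H.y_out hw (by omega) (by omega)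
      have hwx : ℓ w < ℓ (n,0) := H.hstrict _ hw (by omega) (by
        intro h; have h' := congrArg Prod.fst h; simp at h'; omega)
      by_cases hwf : ℓ w ≤ ℓ (n-1,0)
      · exact Or.inl hwf
      · right
        push_neg at hwf
        by_contra hne'
        exact hyw (hupp _ ⟨w, hw, rfl⟩ hwf (ℓ (n-1,0) + ℓ w) (by omega) (by omega))
    have hnot1 : ∀ w : ℕ × ℕ, w ∈ Vnm n m → (w.1 = 5 ∨ w.1 = 7 ∨ w.1 = 9) →
        ℓ w ≠ 1 ∧ ℓ w ≠ ℓ (n-1,0) := by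
      intro w hw hco
      constructor
      · intro h
        rcases H.cc_carrier hw (by rw [h, hc]) with h' | h'
        · omega
        · have h'' := congrArg Prod.fst h'; simp at h''; omega
      · intro h
        have h' := congrArg Prod.fst (H.f_carrier hw h); simp at h'; omega
    have hw5 : ((5,0) : ℕ×ℕ) ∈ Vnm n m := H.v0 (Or.inl (by omega))
    have hw7 : ((7,0) : ℕ×ℕ) ∈ Vnm n m := H.v0 (Or.inl (by omega))
    have hw9 : ((9,0) : ℕ×ℕ) ∈ Vnm n m := H.v0 (Or.inl (by omega))
    have h5 := hsm (5,0) hw5 (by simp)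
    have h7 := hsm (7,0) hw7 (by simp)
    have h9 := hsm (9,0) hw9 (by simp)
    have h5' := hnot1 (5,0) hw5 (by simp)
    have h7' := hnot1 (7,0) hw7 (by simp)
    have h9' := hnot1 (9,0) hw9 (by simp)
    have hpos5 := H.pos hw5
    have hpos7 := H.pos hw7
    have hpos9 := H.pos hw9
    -- each low-label must be exactly 2 (with f ≤ 3)
    have hkill2 : ∀ a b : ℕ × ℕ, a ∈ Vnm n m → b ∈ Vnm n m → a.1 + b.1 ∈ Sn n →
        a ≠ b → ℓ a = 2 → ℓ b = 2 → False := by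
      intro a b ha hb hadj hab ha2 hb2
      have hin := sum_in H.toCtx ha hb hab hadj
      rw [ha2, hb2] at hin
      -- Lab 4: since f ≤ 3 and f ≥ 2: f = 2 → 4 = f + 2: upper run from 4 gives Lab (f+1)=Lab 3 no...
      -- f = 3 → 4 = f + 1: contra hfout. f = 2 → Lab 4, 4 > f: upper run: Lab (f+1) = Lab 3? f+1=3 ≥ 4? no.
      -- f = 2: hupp 4: Lab v for all v in [4, M]; but f + 1 = 3 < 4. Instead: 2 = f: carrier of 2 is y only;
      -- but a has label 2 = f: f_carrier a = y: coord 5,7,9 ≠ n-1: contra! Handle f = 2 before.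
      have hf3 : ℓ (n-1,0) = 3 := by
        rcases (by omega : ℓ (n-1,0) = 2 ∨ ℓ (n-1,0) = 3) with h' | h'
        · exfalso
          have hA := H.f_carrier ha (by rw [ha2, h'])
          have hB := H.f_carrier hb (by rw [hb2, h'])
          exact hab (hA.trans hB.symm)
        · exact h'
      rw [hf3] at hfout
      exact hfout (by convert hin using 2)
    have hkillM : ∀ a b : ℕ × ℕ, a ∈ Vnm n m → b ∈ Vnm n m → a.1 + b.1 ∈ Sn n →
        a ≠ b → ℓ a + 1 = ℓ (n,0) → ℓ b + 1 = ℓ (n,0) → False := by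
      intro a b ha hb hadj hab haM hbM
      have hin := sum_in H.toCtx ha hb hab hadj
      have hle := H.lab_le hin
      omega
    have hne57 : ((5,0) : ℕ×ℕ) ≠ (7,0) := by simp
    have hne59 : ((5,0) : ℕ×ℕ) ≠ (9,0) := by simp
    have hne79 : ((7,0) : ℕ×ℕ) ≠ (9,0) := by simp
    have hadj57 : ((5:ℕ),(0:ℕ)).1 + ((7:ℕ),(0:ℕ)).1 ∈ Sn n := Or.inl (by simp; omega)
    have hadj59 : ((5:ℕ),(0:ℕ)).1 + ((9:ℕ),(0:ℕ)).1 ∈ Sn n := Or.inl (by simp; omega)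
    have hadj79 : ((7:ℕ),(0:ℕ)).1 + ((9:ℕ),(0:ℕ)).1 ∈ Sn n := Or.inl (by simp; omega)
    rcases h5 with h5v | h5v <;> rcases h7 with h7v | h7v <;> rcases h9 with h9v | h9v
    · exact hkill2 _ _ hw5 hw7 hadj57 hne57 (by omega) (by omega)
    · exact hkill2 _ _ hw5 hw7 hadj57 hne57 (by omega) (by omega)
    · exact hkill2 _ _ hw5 hw9 hadj59 hne59 (by omega) (by omega)
    · exact hkillM _ _ hw7 hw9 hadj79 hne79 h7v h9v
    · exact hkill2 _ _ hw7 hw9 hadj79 hne79 (by omega) (by omega)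
    · exact hkillM _ _ hw5 hw9 hadj59 hne59 h5v h9v
    · exact hkillM _ _ hw5 hw7 hadj57 hne57 h5v h7v
    · exact hkillM _ _ hw5 hw7 hadj57 hne57 h5v h7v
  -- census: labels in (f, M-2) with M ≤ v+3 must be e
  have hcensus : ∀ v, Lab n m ℓ v → ℓ (n-1,0) < v → v + 1 < ℓ (n+2,0) →
      ℓ (n+2,0) ≤ v + 3 → v = ℓ (n-2,0) := by
    intro v hv hfv hvM hMv
    obtain ⟨w, hw, hwl⟩ := hv
    rcases H.coord_cases hw with h|h|h|h|h|h|h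
    · have h' := H.psi2_eq hw h; rw [hc] at h'; omega
    · have h' := (H.psi3_top hw h).1; omega
    · have hsum := H.smalls_in3 hw h.1 h.2 hu2 h23
      rw [← hwl] at hsum
      have := H.lab_le hsum
      omega
    · rw [H.y'_unique hw h] at hwl; omega
    · rw [H.y_unique hw h] at hwl; omega
    · rw [H.x_unique hw h] at hwl; omega
    · rw [H.z_unique hw h] at hwl; omega
  have hclaimC : ∀ v, Lab n m ℓ v → v ≤ ℓ (n-1,0) ∨ ℓ (n+2,0) ≤ v + 2 := by
    intro v hv
    by_contra hcon
    push_neg at hcon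
    obtain ⟨h1', h2'⟩ := hcon
    have hM3 : Lab n m ℓ (ℓ (n+2,0) - 3) := hupp v hv (by omega) _ (by omega) (by omega)
    have hM2' : Lab n m ℓ (ℓ (n+2,0) - 2) := hupp v hv (by omega) _ (by omega) (by omega)
    have e3 := hcensus _ hM3 (by omega) (by omega) (by omega)
    have e2 := hcensus _ hM2' (by omega) (by omega) (by omega)
    omega
  have hwin1 : ℓ (n+2,0) ≤ ℓ (n-1,0) + ℓ u1 + 2 := by
    rcases hclaimC _ hy1 with h | h <;> omega
  have hEdi : ℓ (n-2,0) + 1 ≤ ℓ (n-1,0) ∨ ℓ (n-2,0) + 2 = ℓ (n+2,0) := by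
    rcases hclaimC _ H.lab_e with h | h
    · rcases lt_or_eq_of_le h with h' | h'
      · left; omega
      · exact absurd h' hef
    · right; omega
  rcases hEdi with hE2 | hE1
  · -- CASE E2: e ≤ f - 1
    have hup2 : ∀ v, Lab n m ℓ v → ℓ (n-1,0) < v →
        v + 1 = ℓ (n+2,0) ∨ v = ℓ (n+2,0) := by
      intro v hv hfv
      have hcl := hclaimC v hv
      have hle := H.lab_le hv
      by_contra hcon
      push_neg at hcon
      have hvv : v + 2 = ℓ (n+2,0) := by omega
      have := hcensus v hv hfv (by omega) (by omega)
      omega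
    have hft1 : ℓ (n-1,0) + ℓ u1 + 1 = ℓ (n+2,0) := by
      rcases hup2 _ hy1 (by omega) with h | h
      · omega
      · rcases hup2 _ hy2 (by omega) with h' | h' <;> omega
    have hft2 : ℓ (n-1,0) + ℓ u2 = ℓ (n+2,0) := by
      rcases hup2 _ hy2 (by omega) with h | h <;> omega
    have hlabf1 : Lab n m ℓ (ℓ (n-1,0) - 1) := hlow _ (by omega) (by omega)
    obtain ⟨w, hw, hwl⟩ := hlabf1
    rcases H.coord_cases hw with h|h|h|h|h|h|h
    · have h' := H.psi2_eq hw h; rw [hc] at h'; omega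
    · -- psi3 carrier of f-1
      have hyw : Lab n m ℓ (ℓ (n-1,0) + ℓ w) := H.psi3_f_in hw h
      rw [← hwl] at hyw
      rcases hup2 _ hyw (by omega) with hM' | hM'
      · omega
      · -- M = 2f - 1, t = f-2, t' = f-1
        have := hup2 _ htw (by omega)
        omega
    · have hs1 : Lab n m ℓ (ℓ w + ℓ u1) := H.smalls_in3 hw h.1 h.2 hu1 h13
      rw [← hwl] at hs1
      have := hup2 _ hs1 (by omega)
      omega
    · rw [H.y'_unique hw h] at hwl
      have heq : ℓ (n-2,0) + ℓ u2 = ℓ (n,0) := by omega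
      rw [heq] at hp2
      exact hp2 H.lab_M1
    · rw [H.y_unique hw h] at hwl; omega
    · rw [H.x_unique hw h] at hwl; omega
    · rw [H.z_unique hw h] at hwl; omega
  · -- CASE E1: e = M - 2
    have hpsi3 : ∀ w : ℕ × ℕ, w ∈ Vnm n m → w.1 = 3 → 3 ≤ ℓ w := by
      intro w hw h3
      have hpw := H.pos hw
      have hout := H.y'_out3 hw h3
      by_contra hlt'
      rcases (by omega : ℓ w = 1 ∨ ℓ w = 2) with h' | h'
      · rw [h'] at hout
        have heq : ℓ (n-2,0) + 1 = ℓ (n,0) := by omega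
        rw [heq] at hout; exact hout H.lab_M1
      · rw [h'] at hout
        rw [hE1] at hout; exact hout H.lab_M
    have ht3 : 3 ≤ ℓ u1 := hpsi3 u1 hu1 h13
    have hupE : ∀ v, Lab n m ℓ v → ℓ (n-1,0) < v →
        ℓ (n+2,0) ≤ v + 2 ∧ v ≤ ℓ (n+2,0) := by
      intro v hv h
      refine ⟨?_, H.lab_le hv⟩
      rcases hclaimC v hv with h' | h' <;> omega
    have hvoid : ∀ v, 2 ≤ v → v + 1 ≤ ℓ (n-1,0) →
        (∃ w : ℕ × ℕ, w ∈ Vnm n m ∧ w.1 = 3 ∧ ℓ w = v) ∨ v = ℓ (n-2,0) ∨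
        (Lab n m ℓ (v + ℓ u1) ∧ Lab n m ℓ (v + ℓ u2)) := by
      intro v h2v hvf
      obtain ⟨w, hw, hwl⟩ := hlow v (by omega) (by omega)
      rcases H.coord_cases hw with h|h|h|h|h|h|h
      · have h' := H.psi2_eq hw h; rw [hc] at h'; omega
      · exact Or.inl ⟨w, hw, h, hwl.symm⟩
      · refine Or.inr (Or.inr ⟨?_, ?_⟩)
        · have hs := H.smalls_in3 hw h.1 h.2 hu1 h13; rwa [← hwl] at hs
        · have hs := H.smalls_in3 hw h.1 h.2 hu2 h23; rwa [← hwl] at hs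
      · rw [H.y'_unique hw h] at hwl; exact Or.inr (Or.inl hwl)
      · rw [H.y_unique hw h] at hwl; omega
      · rw [H.x_unique hw h] at hwl; omega
      · rw [H.z_unique hw h] at hwl; omega
    have hwinp : ∀ w : ℕ × ℕ, w ∈ Vnm n m → w.1 = 3 →
        ℓ (n+2,0) ≤ ℓ (n-1,0) + ℓ w + 2 ∧ ℓ (n-1,0) + ℓ w ≤ ℓ (n+2,0) := by
      intro w hw h3
      refine ⟨?_, (H.psi3_top hw h3).1⟩
      rcases hclaimC _ (H.psi3_f_in hw h3) with h' | h'
      · have := H.pos hw; omega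
      · omega
    have hwp2 := hwinp u2 hu2 h23
    -- psi3 twins general: two psi3 vertices with different labels are adjacent
    have htwg : ∀ w : ℕ × ℕ, w ∈ Vnm n m → w.1 = 3 → ∀ w' : ℕ × ℕ, w' ∈ Vnm n m →
        w'.1 = 3 → ℓ w ≠ ℓ w' → Lab n m ℓ (ℓ w + ℓ w') := by
      intro w hw h3 w' hw' h3' hnel
      exact H.twins3 hw h3 hw' h3' (fun h => hnel (by rw [h]))
    -- VOID at f-1
    rcases hvoid (ℓ (n-1,0) - 1) (by omega) (by omega) with ⟨w0, hw0, h03, h0l⟩ | hEc | ⟨hs1, hs2⟩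
    · -- sub-alpha: psi3 label f-1
      have hw0win := hwinp w0 hw0 h03
      rw [h0l] at hw0win
      -- M ∈ [2f-1, 2f+1]
      rcases (by omega : ℓ (n+2,0) = 2 * ℓ (n-1,0) - 1 ∨ ℓ (n+2,0) = 2 * ℓ (n-1,0) ∨
          ℓ (n+2,0) = 2 * ℓ (n-1,0) + 1) with hM | hM | hM
      · -- M = 2f-1: t,t' in [f-3, f-1]
        have hr1 : ℓ (n-1,0) - 3 ≤ ℓ u1 ∧ ℓ u1 ≤ ℓ (n-1,0) - 1 := by
          have := hwinp u1 hu1 h13; omega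
        have hr2 : ℓ (n-1,0) - 3 ≤ ℓ u2 ∧ ℓ u2 ≤ ℓ (n-1,0) - 1 := by omega
        rcases (by omega : (ℓ u1 = ℓ (n-1,0) - 3 ∧ ℓ u2 = ℓ (n-1,0) - 2) ∨
            (ℓ u1 = ℓ (n-1,0) - 3 ∧ ℓ u2 = ℓ (n-1,0) - 1) ∨
            (ℓ u1 = ℓ (n-1,0) - 2 ∧ ℓ u2 = ℓ (n-1,0) - 1)) with hP | hP | hP
        · have := hupE _ htw (by omega); omega
        · have := hupE _ htw (by omega); omega
        · -- (f-2, f-1): VOID f-3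
          rcases hvoid (ℓ (n-1,0) - 3) (by omega) (by omega) with
            ⟨w1, hw1, h131, h1l⟩ | hEc' | ⟨hs1', hs2'⟩
          · have h3w1 := hpsi3 w1 hw1 h131
            have htww := htwg w1 hw1 h131 u2 hu2 h23 (by omega)
            rw [h1l] at htww
            have := hupE _ htww (by omega)
            omega
          · omega
          · have := hupE _ hs2' (by omega)
            omega
      · -- M = 2f: t = f-2, t' = f-1, twins = 2f-3 = M-3
        have hr1 : ℓ u1 = ℓ (n-1,0) - 2 ∧ ℓ u2 = ℓ (n-1,0) - 1 := by
          have := hwinp u1 hu1 h13; omega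
        have := hupE _ htw (by omega)
        omega
      · -- M = 2f+1
        have hr2 : ℓ u2 = ℓ (n-1,0) - 1 ∨ ℓ u2 = ℓ (n-1,0) + 1 := by omega
        rcases hr2 with h' | h'
        · have := hwinp u1 hu1 h13; omega
        · have := hupE _ ⟨u2, hu2, rfl⟩ (by omega)
          omega
    · -- f - 1 = e = M-2: M = f+1: contra
      omega
    · -- sub-beta: smalls: t = M-f-1, t' = M-f
      have hup1 := hupE _ hs1 (by omega)
      have hbt : ℓ (n-1,0) + ℓ u1 + 1 = ℓ (n+2,0) ∧ ℓ (n-1,0) + ℓ u2 = ℓ (n+2,0) := by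
        have := hwinp u1 hu1 h13
        omega
      -- twins cases
      rcases hclaimC _ htw with hlo | hhi
      · -- t + t' ≤ f: 2M ≤ 3f+1: VOID f-2
        rcases hvoid (ℓ (n-1,0) - 2) (by omega) (by omega) with
          ⟨w1, hw1, h131, h1l⟩ | hEc' | ⟨hs1', hs2'⟩
        · -- psi3 label f-2
          have hne1 : ℓ w1 ≠ ℓ u1 := by omega
          have htww := htwg w1 hw1 h131 u1 hu1 h13 hne1
          rw [h1l] at htww
          have := hupE _ htww (by omega)
          omega
        · omega
        · have := hupE _ hs1' (by omega)
          omega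
      · -- t+t' ∈ {M-2, M-1, M}
        have hle' := H.lab_le htw
        rcases (by omega : ℓ u1 + ℓ u2 + 2 = ℓ (n+2,0) ∨ ℓ u1 + ℓ u2 + 1 = ℓ (n+2,0) ∨
            ℓ u1 + ℓ u2 = ℓ (n+2,0)) with hV | hV | hV
        · -- M = 2f-1: t = f-2, t' = f-1: VOID f-3
          rcases hvoid (ℓ (n-1,0) - 3) (by omega) (by omega) with
            ⟨w1, hw1, h131, h1l⟩ | hEc' | ⟨hs1', hs2'⟩
          · have h3w1 := hpsi3 w1 hw1 h131
            have hne1 : ℓ w1 ≠ ℓ u2 := by omega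
            have htww := htwg w1 hw1 h131 u2 hu2 h23 hne1
            rw [h1l] at htww
            have := hupE _ htww (by omega)
            omega
          · omega
          · have := hupE _ hs2' (by omega)
            omega
        · omega
        · omega


lemma HCtx.kill_c2 (H : HCtx n m ℓ) (hc : cc n ℓ = 2) {u1 u2 : ℕ × ℕ}
    (hu1 : u1 ∈ Vnm n m) (h13 : u1.1 = 3) (hu2 : u2 ∈ Vnm n m) (h23 : u2.1 = 3)
    (hlt : ℓ u1 < ℓ u2) : False := by
  have hn := H.hn
  have hspec := H.cc_spec
  rw [hc] at hspec
  have hfM2 := H.f_lt_M2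
  have heM2 := H.e_lt_M2
  have hef := H.e_ne_f
  have hfpos := H.pos H.yV
  have hf2 : ℓ (n-1,0) ≠ 2 := fun h => H.cc_ne_f (by rw [hc, h])
  have hL2 : Lab n m ℓ 2 := by have := H.lab_cc; rwa [hc] at this
  have ofMod0 : ∀ a b : ℕ, a ≡ b [MOD 2] → a % 2 = b % 2 := fun a b h => h
  have hm1 : 1 % 2 = ℓ (n-1,0) % 2 ∨ 1 % 2 = ℓ (n+2,0) % 2 := by
    rcases H.chain H.lab_one with ⟨_, h, _⟩ | ⟨_, h, _⟩
    · left; rw [hc] at h; exact ofMod0 _ _ h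
    · right; rw [hc] at h; exact ofMod0 _ _ h
  have hm2 : 2 % 2 = ℓ (n-1,0) % 2 ∨ 2 % 2 = ℓ (n+2,0) % 2 := by
    rcases H.chain hL2 with ⟨_, h, _⟩ | ⟨_, h, _⟩
    · left; rw [hc] at h; exact ofMod0 _ _ h
    · right; rw [hc] at h; exact ofMod0 _ _ h
  have hP1 : ℓ (n-1,0) % 2 ≠ ℓ (n+2,0) % 2 := by omega
  have toMod : ∀ a b : ℕ, a % 2 = b % 2 → a ≡ b [MOD 2] := fun a b h => h
  have ofMod : ∀ a b : ℕ, a ≡ b [MOD 2] → a % 2 = b % 2 := fun a b h => h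
  have hfullf : ∀ v, 1 ≤ v → v ≤ ℓ (n-1,0) → v % 2 = ℓ (n-1,0) % 2 → Lab n m ℓ v := by
    rcases H.chain H.lab_one with ⟨_, h, hmid⟩ | ⟨_, h, hmid⟩ <;> rw [hc] at h hmid <;>
      have hh := ofMod _ _ h
    · intro v h1 h2 h3
      exact hmid v h1 h2 (toMod _ _ (by omega))
    · rcases H.chain hL2 with ⟨_, h', hmid'⟩ | ⟨_, h', hmid'⟩ <;> rw [hc] at h' hmid' <;>
        have hh' := ofMod _ _ h'
      · intro v h1 h2 h3
        exact hmid' v (by omega) h2 (toMod _ _ (by omega))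
      · exfalso; omega
  have hfullM : ∀ v, 1 ≤ v → v ≤ ℓ (n+2,0) → v % 2 = ℓ (n+2,0) % 2 → Lab n m ℓ v := by
    rcases H.chain H.lab_one with ⟨_, h, hmid⟩ | ⟨_, h, hmid⟩ <;> rw [hc] at h hmid <;>
      have hh := ofMod _ _ h
    · rcases H.chain hL2 with ⟨_, h', hmid'⟩ | ⟨_, h', hmid'⟩ <;> rw [hc] at h' hmid' <;>
        have hh' := ofMod _ _ h'
      · exfalso; omega
      · intro v h1 h2 h3
        exact hmid' v (by omega) h2 (toMod _ _ (by omega))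
    · intro v h1 h2 h3
      exact hmid v h1 h2 (toMod _ _ (by omega))
  have huppf : ∀ v, Lab n m ℓ v → v % 2 = ℓ (n-1,0) % 2 → v ≤ ℓ (n-1,0) := by
    intro v hv hpar
    rcases H.chain hv with ⟨h1, _, _⟩ | ⟨_, h2, _⟩
    · exact h1
    · rw [hc] at h2; exfalso
      have hv2 := ofMod _ _ h2
      omega
  have hpt1 : (ℓ (n-1,0) + ℓ u1) % 2 = ℓ (n+2,0) % 2 := by
    have h := (H.psi3_top hu1 h13).2; rw [hc] at h; exact ofMod _ _ h
  have hpt2 : (ℓ (n-1,0) + ℓ u2) % 2 = ℓ (n+2,0) % 2 := by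
    have h := (H.psi3_top hu2 h23).2; rw [hc] at h; exact ofMod _ _ h
  have htop1 : ℓ (n-1,0) + ℓ u1 ≤ ℓ (n+2,0) := (H.psi3_top hu1 h13).1
  have htop2 : ℓ (n-1,0) + ℓ u2 ≤ ℓ (n+2,0) := (H.psi3_top hu2 h23).1
  have hpar_t : ℓ u1 % 2 = ℓ u2 % 2 := by omega
  have htstep : ℓ u1 + 2 ≤ ℓ u2 := by omega
  have hp1 : ¬ Lab n m ℓ (ℓ (n-2,0) + ℓ u1) := H.y'_out3 hu1 h13
  have hp2 : ¬ Lab n m ℓ (ℓ (n-2,0) + ℓ u2) := H.y'_out3 hu2 h23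
  have htf1 : ℓ u1 ≠ ℓ (n-1,0) := H.psi3_ne_f hu1 h13
  have htf2 : ℓ u2 ≠ ℓ (n-1,0) := H.psi3_ne_f hu2 h23
  have hpos1 := H.pos hu1
  have hpose := H.pos H.y'V
  have ht'3 : 3 ≤ ℓ u2 := by omega
  -- y' and x are not psi3 or y coords
  have hyO : ∀ w : ℕ × ℕ, w ∈ Vnm n m → w.1 ≠ 3 → w.1 ≠ n - 1 →
      ¬ Lab n m ℓ (ℓ (n-1,0) + ℓ w) := fun w hw a b => H.y_out hw a b
  rcases (by omega : ℓ (n+2,0) % 2 = 1 ∧ ℓ (n-1,0) % 2 = 0 ∨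
      ℓ (n+2,0) % 2 = 0 ∧ ℓ (n-1,0) % 2 = 1) with ⟨hMo, hfe⟩ | ⟨hMe, hfo⟩
  · -- BLOCK c2a : M odd, f even
    have hf4 : 4 ≤ ℓ (n-1,0) := by omega
    have hM7 : ℓ (n-1,0) + 3 ≤ ℓ (n+2,0) := by omega
    have hsmall : ∀ w : ℕ × ℕ, w ∈ Vnm n m → 4 ≤ w.1 → w.1 ≤ n - 3 →
        ℓ w % 2 = 1 → ℓ w + ℓ u2 ≤ ℓ (n-1,0) := by
      intro w hw h4 hn3 hodd
      have hin := H.smalls_in3 hw h4 hn3 hu2 h23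
      exact huppf _ hin (by omega)
    have hcc2 : ∀ w : ℕ × ℕ, w ∈ Vnm n m → ℓ w = 2 → w.1 = 2 ∨ w = (n,0) :=
      fun w hw h => H.cc_carrier hw (by rw [h, hc])
    have hfsmallkill : ∀ w : ℕ × ℕ, w ∈ Vnm n m → (w.1 = 5 ∨ w.1 = 7) →
        ℓ (n-1,0) ≤ 6 → ℓ w = 4 := by
      intro w hw hco hf6
      have hpw := H.pos hw
      have h4c : 4 ≤ w.1 := by omega
      have hn3 : w.1 ≤ n - 3 := by omega
      by_cases hodd : ℓ w % 2 = 1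
      · exfalso
        have hb := hsmall w hw h4c hn3 hodd
        have hyw := H.y_out hw (by omega) (by omega)
        exact hyw (hfullM _ (by omega) (by omega) (by omega))
      · have hle := huppf _ ⟨w, hw, rfl⟩ (by omega)
        have hne2 : ℓ w ≠ 2 := by
          intro h
          rcases hcc2 w hw h with h' | h'
          · omega
          · have h'' := congrArg Prod.fst h'; simp at h''; omega
        have hnef : ℓ w ≠ ℓ (n-1,0) := by
          intro h
          have h'' := congrArg Prod.fst (H.f_carrier hw h); simp at h''; omega
        omega
    have hf8 : 8 ≤ ℓ (n-1,0) := by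
      by_contra hf6'
      have hw5 : ((5,0) : ℕ×ℕ) ∈ Vnm n m := H.v0 (Or.inl (by omega))
      have hw7 : ((7,0) : ℕ×ℕ) ∈ Vnm n m := H.v0 (Or.inl (by omega))
      have h5 := hfsmallkill (5,0) hw5 (by simp) (by omega)
      have h7 := hfsmallkill (7,0) hw7 (by simp) (by omega)
      rcases (by omega : ℓ (n-1,0) = 4 ∨ ℓ (n-1,0) = 6) with hf' | hf'
      · have h'' := congrArg Prod.fst (H.f_carrier hw5 (by omega)); simp at h''; omega
      · have hin := sum_in H.toCtx hw5 hw7 (by simp) (Or.inl (by simp; omega))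
        have := huppf _ hin (by omega)
        omega
    have heodd : ℓ (n-2,0) % 2 = 1 := by
      by_contra he
      have hle := huppf _ H.lab_e (by omega)
      exact hp1 (hfullM _ (by omega) (by omega) (by omega))
    obtain ⟨w4, hw4, hw4l⟩ := hfullM (ℓ (n+2,0) - 4) (by omega) (by omega) (by omega)
    have he4 : ℓ (n-2,0) = ℓ (n+2,0) - 4 := by
      rcases H.coord_cases hw4 with h|h|h|h|h|h|h
      · have h' := H.psi2_eq hw4 h; rw [hc] at h'; omega
      · have h' := (H.psi3_top hw4 h).1; omega
      · have hb := hsmall w4 hw4 h.1 h.2 (by omega)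
        omega
      · rw [H.y'_unique hw4 h] at hw4l; omega
      · rw [H.y_unique hw4 h] at hw4l; omega
      · rw [H.x_unique hw4 h] at hw4l; omega
      · rw [H.z_unique hw4 h] at hw4l; omega
    by_cases hD3 : ℓ (n+2,0) = ℓ (n-1,0) + 3
    · have htv : ℓ u1 = 1 := by omega
      rw [htv] at hp1
      have heq : ℓ (n-2,0) + 1 = ℓ (n-1,0) := by omega
      rw [heq] at hp1
      exact hp1 H.lab_f
    · obtain ⟨w6, hw6, hw6l⟩ := hfullM (ℓ (n+2,0) - 6) (by omega) (by omega) (by omega)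
      rcases H.coord_cases hw6 with h|h|h|h|h|h|h
      · have h' := H.psi2_eq hw6 h; rw [hc] at h'; omega
      · have h' := (H.psi3_top hw6 h).1; omega
      · have hb := hsmall w6 hw6 h.1 h.2 (by omega)
        omega
      · rw [H.y'_unique hw6 h] at hw6l; omega
      · rw [H.y_unique hw6 h] at hw6l; omega
      · rw [H.x_unique hw6 h] at hw6l; omega
      · rw [H.z_unique hw6 h] at hw6l; omega
  · -- BLOCK c2b : M even, f odd
    have hf3 : 3 ≤ ℓ (n-1,0) := by
      by_contra hf1
      have htle := huppf _ ⟨u1, hu1, rfl⟩ (by omega)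
      omega
    have ht'f2 : ℓ u2 + 2 ≤ ℓ (n-1,0) := by
      have := huppf _ ⟨u2, hu2, rfl⟩ (by omega)
      omega
    have hM6 : ℓ (n-1,0) + 3 ≤ ℓ (n+2,0) := by omega
    have heeven : ℓ (n-2,0) % 2 = 0 := by
      by_contra he
      have hle := huppf _ H.lab_e (by omega)
      have h1 : ℓ (n+2,0) < ℓ (n-2,0) + ℓ u1 := by
        by_contra hle'
        exact hp1 (hfullM _ (by omega) (by omega) (by omega))
      omega
    have hsmallb : ∀ w : ℕ × ℕ, w ∈ Vnm n m → 4 ≤ w.1 → w.1 ≤ n - 3 →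
        ℓ w % 2 = 0 → ℓ w + ℓ u2 ≤ ℓ (n-1,0) := by
      intro w hw h4 hn3 heven
      have hin := H.smalls_in3 hw h4 hn3 hu2 h23
      exact huppf _ hin (by omega)
    obtain ⟨w4, hw4, hw4l⟩ := hfullM (ℓ (n+2,0) - 4) (by omega) (by omega) (by omega)
    have he4 : ℓ (n-2,0) = ℓ (n+2,0) - 4 := by
      rcases H.coord_cases hw4 with h|h|h|h|h|h|h
      · have h' := H.psi2_eq hw4 h; rw [hc] at h'
        omega
      · have hpw := (H.psi3_top hw4 h).2; rw [hc] at hpw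
        have := ofMod _ _ hpw
        omega
      · have hb := hsmallb w4 hw4 h.1 h.2 (by omega)
        omega
      · rw [H.y'_unique hw4 h] at hw4l; omega
      · rw [H.y_unique hw4 h] at hw4l; omega
      · rw [H.x_unique hw4 h] at hw4l; omega
      · rw [H.z_unique hw4 h] at hw4l; omega
    by_cases hD3 : ℓ (n+2,0) = ℓ (n-1,0) + 3
    · have htv : ℓ u1 = 1 := by omega
      rw [htv] at hp1
      have heq : ℓ (n-2,0) + 1 = ℓ (n-1,0) := by omega
      rw [heq] at hp1
      exact hp1 H.lab_f
    · obtain ⟨w6, hw6, hw6l⟩ := hfullM (ℓ (n+2,0) - 6) (by omega) (by omega) (by omega)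
      rcases H.coord_cases hw6 with h|h|h|h|h|h|h
      · have h' := H.psi2_eq hw6 h; rw [hc] at h'
        omega
      · have hpw := (H.psi3_top hw6 h).2; rw [hc] at hpw
        have := ofMod _ _ hpw
        omega
      · have hb := hsmallb w6 hw6 h.1 h.2 (by omega)
        omega
      · rw [H.y'_unique hw6 h] at hw6l; omega
      · rw [H.y_unique hw6 h] at hw6l; omega
      · rw [H.x_unique hw6 h] at hw6l; omega
      · rw [H.z_unique hw6 h] at hw6l; omega



lemma HCtx.case_bn (H : HCtx n m ℓ) {u1 u2 : ℕ × ℕ} (hu1 : u1 ∈ Vnm n m)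
    (h13 : u1.1 = 3) (hu2 : u2 ∈ Vnm n m) (h23 : u2.1 = 3) : ℓ u1 = ℓ u2 := by
  by_contra hne
  have hkill : ∀ v1 v2 : ℕ × ℕ, v1 ∈ Vnm n m → v1.1 = 3 → v2 ∈ Vnm n m → v2.1 = 3 →
      ℓ v1 < ℓ v2 → False := by
    intro v1 v2 hv1 hv13 hv2 hv23 hvlt
    have hvne : v1 ≠ v2 := fun h => by rw [h] at hvlt; omega
    have htw : Lab n m ℓ (ℓ v1 + ℓ v2) := H.twins3 hv1 hv13 hv2 hv23 hvne
    have hLt : Lab n m ℓ (ℓ v1) := ⟨v1, hv1, rfl⟩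
    have h1top := H.psi3_top hv1 hv13
    have h2top := H.psi3_top hv2 hv23
    have hcle : cc n ℓ ≤ 2 := by
      by_contra hgt
      exact H.kill_c3 (by omega) hLt htw h1top.2 h2top.2
    have hcc1 := H.cc_pos
    rcases (by omega : cc n ℓ = 1 ∨ cc n ℓ = 2) with hc | hc
    · exact H.kill_c1 hc hv1 hv13 hv2 hv23 hvlt
    · exact H.kill_c2 hc hv1 hv13 hv2 hv23 hvlt
  rcases lt_or_gt_of_ne hne with h | h
  · exact absurd (hkill u1 u2 hu1 h13 hu2 h23 h) (by simp)
  · exact absurd (hkill u2 u1 hu2 h23 hu1 h13 h) (by simp)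

theorem psi_three_label_unique' (n : ℕ) (hn : 39 ≤ n) (m : ℕ → ℕ)
    (hm : Admissible n m) (ℓ : ℕ × ℕ → ℕ) (hℓ : IsSumLabelingG n m ℓ)
    (hmin : ∃ u ∈ Vnm n m, ℓ u = 1)
    (v₁ v₂ : ℕ × ℕ) (hv₁ : v₁ ∈ psi m 3) (hv₂ : v₂ ∈ psi m 3) :
    ℓ v₁ = ℓ v₂ := by
  have C : Ctx n m ℓ := ⟨hn, hm, hℓ, hmin⟩
  by_cases hP : ∃ v ∈ Vnm n m, v.1 = n - 1 ∧ ∀ u ∈ Vnm n m, u.1 ≠ n + 2 → ℓ u ≤ ℓ v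
  · obtain ⟨v, hvV, hv1, hvmax⟩ := hP
    have e1 := C.goal_n1 hvV hvmax hv1 (C.psi3_mem hv₁) hv₁.1
    have e2 := C.goal_n1 hvV hvmax hv1 (C.psi3_mem hv₂) hv₂.1
    omega
  · have h2nSn : ∀ k : ℕ, n - 2 ≤ k → k ≤ n → 2 * k ∉ Sn n := by
      intro k h1 h2 hc
      rcases hc with ⟨hc1, hc2⟩ | hc1 <;> omega
    have hVp : ({u | u ∈ Vnm n m ∧ u.1 ≠ n + 2} : Set (ℕ × ℕ)) ⊆ Vnm n m :=
      fun u hu => hu.1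
    obtain ⟨w, hw, hwmax0⟩ := exists_max C hVp
      ⟨(2, 0), C.v0 (Or.inl (by omega)), by simp; omega⟩
    have hwmax : ∀ u ∈ Vnm n m, u.1 ≠ n + 2 → ℓ u ≤ ℓ w :=
      fun u hu h2 => hwmax0 u ⟨hu, h2⟩
    have hcoordn : ∀ v ∈ Vnm n m, (∀ u ∈ Vnm n m, u.1 ≠ n + 2 → ℓ u ≤ ℓ v) →
        v.1 ≠ n + 2 → v = (n, 0) := by
      intro v hvV hvmax hv2
      have hv1 : 2 ≤ v.1 ∧ v.1 ≤ n ∨ v.1 = n + 2 := hvV.1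
      have hcase : v.1 + 3 ≤ n ∨ v.1 = n - 2 ∨ v.1 = n - 1 ∨ v.1 = n := by omega
      rcases hcase with h | h | h | h
      · exact absurd (C.kill_low hvV hvmax h) (by simp)
      · exact absurd (C.kill_n2 hvV hvmax h) (by simp)
      · exact absurd ⟨v, hvV, h, hvmax⟩ hP
      · exact Prod.ext h (C.sec_zero hvV (by rw [h]; exact h2nSn n (by omega) le_rfl))
    have hwx : w = (n, 0) := hcoordn w hw.1 hwmax hw.2
    rw [hwx] at hwmax
    have hstrict : ∀ u ∈ Vnm n m, u.1 ≠ n + 2 → u ≠ (n, 0) → ℓ u < ℓ (n, 0) := by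
      intro u hu h2 hne
      rcases lt_or_eq_of_le (hwmax u hu h2) with h | h
      · exact h
      · exact absurd (hcoordn u hu (fun u' hu' h2' => h ▸ hwmax u' hu' h2') h2) hne
    have H : HCtx n m ℓ := { toCtx := C, hmax := hwmax, hstrict := hstrict }
    exact H.case_bn (C.psi3_mem hv₁) hv₁.1 (C.psi3_mem hv₂) hv₂.1

end PsiAux


/-- For `n ≥ 39`, any admissible `m`, and any minimal sum labeling `ℓ` of
`G(n,m)`, all vertices of `ψ(3)` carry the same label. -/
theorem psi_three_label_unique (n : ℕ) (hn : 39 ≤ n) (m : ℕ → ℕ)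
    (hm : Admissible n m) (ℓ : ℕ × ℕ → ℕ) (hℓ : IsSumLabelingG n m ℓ)
    (hmin : ∃ u ∈ Vnm n m, ℓ u = 1)
    (v₁ v₂ : ℕ × ℕ) (hv₁ : v₁ ∈ psi m 3) (hv₂ : v₂ ∈ psi m 3) :
    ℓ v₁ = ℓ v₂ := by
  exact PsiAux.psi_three_label_unique' n hn m hm ℓ hℓ hmin v₁ v₂ hv₁ hv₂
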